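/- Suppose Q : ℝⁿ → Matrix (Fin m) (Fin m) ℝ is a conservative Q-matrix field with continuously differentiable entries, admitting a family of invariant distributions μ^x, uniformly exponentially ergodic with constants C₀, λ, and let F : ℝⁿ × Fin m → ℝⁿ satisfy the central condition, with x ↦ F(x,i) continuously differentiable for every i. Define F̂(x,i,t) := (P^x_t F(x,·))(i). Then there is a constant C > 0 such that for every coordinate k, all i, j ∈ Fin m, all t ≥ 0 and all x: |∂_{x_k} F̂(x,i,t) − ∂_{x_k} F̂(x,j,t)| ≤ C · ( ‖F(x,·)‖_∞ · ‖∂_{x_k}Q(x)‖_ℓ + ‖∂_x F(x,·)‖_∞ ) · e^{−λ t} · max(1, t). -/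

import Mathlib

open MeasureTheory

noncomputable section

/-- ℓ-norm of a matrix: `‖M‖_ℓ = max_i Σⱼ |M i j|`. -/
def lnorm {m : ℕ} (M : Matrix (Fin m) (Fin m) ℝ) : ℝ := ⨆ i, ∑ j, |M i j|

/-- Entrywise partial derivative `∂_{x_k} Q(x)`. -/
def matPartialDeriv {n m : ℕ} (Q : EuclideanSpace ℝ (Fin n) → Matrix (Fin m) (Fin m) ℝ)
    (k : Fin n) (x : EuclideanSpace ℝ (Fin n)) : Matrix (Fin m) (Fin m) ℝ :=
  Matrix.of fun i j => fderiv ℝ (fun y => Q y i j) x (EuclideanSpace.single k 1)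

/-- `F̂(x,i,t) := (P^x_t F(x,·))(i)`, the semigroup applied componentwise to `F(x,·)`. -/
def Fhat {n m : ℕ} (Q : EuclideanSpace ℝ (Fin n) → Matrix (Fin m) (Fin m) ℝ)
    (F : EuclideanSpace ℝ (Fin n) → Fin m → EuclideanSpace ℝ (Fin n))
    (x : EuclideanSpace ℝ (Fin n)) (i : Fin m) (t : ℝ) : EuclideanSpace ℝ (Fin n) :=
  WithLp.toLp 2 (fun l => (NormedSpace.exp (t • Q x)).mulVec (fun j => F x j l) i)

section Aux

open NormedSpace intervalIntegral

attribute [local instance 2000] Matrix.linftyOpNormedRing Matrix.linftyOpNormedAlgebra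

variable {m n : ℕ}

local notation "𝕄" => Matrix (Fin m) (Fin m) ℝ
local notation "𝔼" => EuclideanSpace ℝ (Fin n)

instance : CompleteSpace 𝕄 := FiniteDimensional.complete ℝ _

/-- norm of matrix exponential. -/
lemma norm_exp_le_aux (A : 𝕄) : ‖exp A‖ ≤ Real.exp ‖A‖ := by
  have h1 : exp A = ∑' (nn : ℕ), ((nn.factorial : ℝ))⁻¹ • A ^ nn := congrFun (exp_eq_tsum ℝ) A
  rw [h1]
  have hs : Summable fun nn : ℕ => ‖((nn.factorial : ℝ))⁻¹ • A ^ nn‖ := norm_expSeries_summable' A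
  refine (norm_tsum_le_tsum_norm hs).trans ?_
  have h2 : Real.exp ‖A‖ = ∑' (nn : ℕ), ‖A‖ ^ nn / nn.factorial := by
    rw [Real.exp_eq_exp_ℝ]
    exact congrFun exp_eq_tsum_div ‖A‖
  rw [h2]
  refine Summable.tsum_le_tsum (fun nn => ?_) hs (Real.summable_pow_div_factorial ‖A‖)
  rw [norm_smul, norm_inv, Real.norm_natCast, div_eq_inv_mul]
  rcases Nat.eq_zero_or_pos nn with h | h
  · subst h
    simp only [pow_zero, Nat.factorial_zero, Nat.cast_one, inv_one, one_mul]
    rw [← Matrix.diagonal_one, Matrix.linfty_opNorm_diagonal]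
    refine (pi_norm_le_iff_of_nonneg (by norm_num)).2 fun b => by simp
  · exact mul_le_mul_of_nonneg_left (norm_pow_le' A h) (by positivity)

lemma cont_exp_smul_aux (A : 𝕄) : Continuous fun s : ℝ => exp (s • A) := by
  have h := exp_continuous (𝔸 := 𝕄)
  exact h.comp (continuous_id.smul continuous_const)

lemma commute_exp_smul (A : 𝕄) (s : ℝ) : exp (s • A) * A = A * exp (s • A) :=
  (((Commute.refl A).smul_left s).exp_left).eq

lemma duhamel (A B : 𝕄) :
    exp A - exp B
      = ∫ s in (0:ℝ)..1, exp (s • A) * (A - B) * exp ((1 - s) • B) := by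
  have key : ∀ s : ℝ, HasDerivAt (fun u : ℝ => exp (u • A) * exp ((1 - u) • B))
      (exp (s • A) * (A - B) * exp ((1 - s) • B)) s := by
    intro s
    have h1 : HasDerivAt (fun u : ℝ => exp (u • A)) (A * exp (s • A)) s :=
      hasDerivAt_exp_smul_const' A s
    have h2 : HasDerivAt (fun u : ℝ => exp ((1 - u) • B))
        (-(B * exp ((1 - s) • B))) s := by
      have h3 : HasDerivAt (fun u : ℝ => exp (u • B)) (B * exp ((1 - s) • B)) (1 - s) :=
        hasDerivAt_exp_smul_const' B (1 - s)
      have h4 : HasDerivAt (fun u : ℝ => 1 - u) (-1) s := by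
        simpa using (hasDerivAt_id s).const_sub 1
      have := h3.scomp s h4
      exact this.congr_deriv (by simp)
    have hmul := h1.mul h2
    have hc := commute_exp_smul A s
    refine hmul.congr_deriv (Eq.symm ?_)
    rw [mul_sub, sub_mul, hc, mul_assoc (exp (s • A)) B, sub_eq_add_neg]
    simp [mul_neg]
  have hcont : Continuous fun s : ℝ => exp (s • A) * (A - B) * exp ((1 - s) • B) := by
    refine Continuous.mul (Continuous.mul (cont_exp_smul_aux A) continuous_const) ?_
    exact (cont_exp_smul_aux B).comp (continuous_const.sub continuous_id)
  have hftc := intervalIntegral.integral_eq_sub_of_hasDerivAt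
    (f := fun u : ℝ => exp (u • A) * exp ((1 - u) • B))
    (fun s _ => key s) (hcont.intervalIntegrable 0 1)
  rw [hftc]
  simp [exp_zero]

lemma exp_sub_exp_norm_le (A B : 𝕄) :
    ‖exp A - exp B‖ ≤ Real.exp ‖A‖ * Real.exp ‖B‖ * ‖A - B‖ := by
  rw [duhamel A B]
  have hb : ∀ s ∈ Set.uIoc (0:ℝ) 1,
      ‖exp (s • A) * (A - B) * exp ((1 - s) • B)‖
        ≤ Real.exp ‖A‖ * Real.exp ‖B‖ * ‖A - B‖ := by
    intro s hs
    rw [Set.uIoc_of_le (by norm_num : (0:ℝ) ≤ 1)] at hs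
    obtain ⟨hs0, hs1⟩ := hs
    have e1 : ‖exp (s • A)‖ ≤ Real.exp ‖A‖ := by
      refine (norm_exp_le_aux _).trans (Real.exp_le_exp.2 ?_)
      rw [norm_smul, Real.norm_eq_abs, abs_of_nonneg hs0.le]
      nlinarith [norm_nonneg A]
    have e2 : ‖exp ((1 - s) • B)‖ ≤ Real.exp ‖B‖ := by
      refine (norm_exp_le_aux _).trans (Real.exp_le_exp.2 ?_)
      rw [norm_smul, Real.norm_eq_abs, abs_of_nonneg (by linarith)]
      nlinarith [norm_nonneg B]
    calc ‖exp (s • A) * (A - B) * exp ((1 - s) • B)‖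
        ≤ ‖exp (s • A) * (A - B)‖ * ‖exp ((1 - s) • B)‖ := norm_mul_le _ _
      _ ≤ (‖exp (s • A)‖ * ‖A - B‖) * ‖exp ((1 - s) • B)‖ := by
          gcongr; exact norm_mul_le _ _
      _ ≤ (Real.exp ‖A‖ * ‖A - B‖) * Real.exp ‖B‖ := by gcongr
      _ = Real.exp ‖A‖ * Real.exp ‖B‖ * ‖A - B‖ := by ring
  simpa using intervalIntegral.norm_integral_le_of_norm_le_const hb

lemma contD (A B H : 𝕄) :
    Continuous fun s : ℝ => exp (s • A) * H * exp ((1 - s) • B) := by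
  refine Continuous.mul (Continuous.mul (cont_exp_smul_aux A) continuous_const) ?_
  exact (cont_exp_smul_aux B).comp (continuous_const.sub continuous_id)

/-- The Fréchet derivative of `exp` at `B`, as a continuous linear map. -/
def expD (B : 𝕄) : 𝕄 →L[ℝ] 𝕄 :=
  LinearMap.mkContinuous
    { toFun := fun H => ∫ s in (0:ℝ)..1, exp (s • B) * H * exp ((1 - s) • B)
      map_add' := by
        intro H K
        have heq : (fun s : ℝ => exp (s • B) * (H + K) * exp ((1 - s) • B))
            = fun s : ℝ => exp (s • B) * H * exp ((1 - s) • B)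
              + exp (s • B) * K * exp ((1 - s) • B) := by
          funext s; rw [mul_add, add_mul]
        show (∫ s in (0:ℝ)..1, exp (s • B) * (H + K) * exp ((1 - s) • B)) = _
        rw [heq, intervalIntegral.integral_add ((contD B B H).intervalIntegrable 0 1)
          ((contD B B K).intervalIntegrable 0 1)]
      map_smul' := by
        intro c H
        have heq : (fun s : ℝ => exp (s • B) * (c • H) * exp ((1 - s) • B))
            = fun s : ℝ => c • (exp (s • B) * H * exp ((1 - s) • B)) := by
          funext s; rw [mul_smul_comm, smul_mul_assoc]
        show (∫ s in (0:ℝ)..1, exp (s • B) * (c • H) * exp ((1 - s) • B)) = _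
        rw [heq, intervalIntegral.integral_smul]
        rfl }
    (Real.exp ‖B‖ * Real.exp ‖B‖)
    (by
      intro H
      have hb : ∀ s ∈ Set.uIoc (0:ℝ) 1,
          ‖exp (s • B) * H * exp ((1 - s) • B)‖
            ≤ Real.exp ‖B‖ * Real.exp ‖B‖ * ‖H‖ := by
        intro s hs
        rw [Set.uIoc_of_le (by norm_num : (0:ℝ) ≤ 1)] at hs
        obtain ⟨hs0, hs1⟩ := hs
        have e1 : ‖exp (s • B)‖ ≤ Real.exp ‖B‖ := by
          refine (norm_exp_le_aux _).trans (Real.exp_le_exp.2 ?_)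
          rw [norm_smul, Real.norm_eq_abs, abs_of_nonneg hs0.le]
          nlinarith [norm_nonneg B]
        have e2 : ‖exp ((1 - s) • B)‖ ≤ Real.exp ‖B‖ := by
          refine (norm_exp_le_aux _).trans (Real.exp_le_exp.2 ?_)
          rw [norm_smul, Real.norm_eq_abs, abs_of_nonneg (by linarith)]
          nlinarith [norm_nonneg B]
        calc ‖exp (s • B) * H * exp ((1 - s) • B)‖
            ≤ ‖exp (s • B) * H‖ * ‖exp ((1 - s) • B)‖ := norm_mul_le _ _
          _ ≤ (‖exp (s • B)‖ * ‖H‖) * ‖exp ((1 - s) • B)‖ := by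
              gcongr; exact norm_mul_le _ _
          _ ≤ (Real.exp ‖B‖ * ‖H‖) * Real.exp ‖B‖ := by gcongr
          _ = Real.exp ‖B‖ * Real.exp ‖B‖ * ‖H‖ := by ring
      have := intervalIntegral.norm_integral_le_of_norm_le_const hb
      simpa [mul_assoc] using this)

lemma expD_apply (B H : 𝕄) :
    expD B H = ∫ s in (0:ℝ)..1, exp (s • B) * H * exp ((1 - s) • B) := rfl

lemma hasFDerivAt_exp_aux (B : 𝕄) : HasFDerivAt exp (expD B) B := by
  refine hasFDerivAt_iff_isLittleO_nhds_zero.2 ?_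
  have key : ∀ H : 𝕄, exp (B + H) - exp B - expD B H
      = ∫ s in (0:ℝ)..1,
          (exp (s • (B + H)) - exp (s • B)) * H * exp ((1 - s) • B) := by
    intro H
    have hd := duhamel (B + H) B
    rw [add_sub_cancel_left] at hd
    rw [hd, expD_apply, ← intervalIntegral.integral_sub
      ((contD (B + H) B H).intervalIntegrable 0 1)
      ((contD B B H).intervalIntegrable 0 1)]
    congr 1
    funext s
    rw [sub_mul, sub_mul]
  set K := Real.exp (‖B‖ + 1) * Real.exp ‖B‖ * Real.exp ‖B‖ with hK
  have hKpos : 0 < K := by positivity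
  have bound : ∀ H : 𝕄, ‖H‖ ≤ 1 →
      ‖exp (B + H) - exp B - expD B H‖ ≤ K * (‖H‖ * ‖H‖) := by
    intro H hH
    rw [key H]
    have hb : ∀ s ∈ Set.uIoc (0:ℝ) 1,
        ‖(exp (s • (B + H)) - exp (s • B)) * H * exp ((1 - s) • B)‖
          ≤ K * (‖H‖ * ‖H‖) := by
      intro s hs
      rw [Set.uIoc_of_le (by norm_num : (0:ℝ) ≤ 1)] at hs
      obtain ⟨hs0, hs1⟩ := hs
      have e0 : ‖exp (s • (B + H)) - exp (s • B)‖
          ≤ Real.exp (‖B‖ + 1) * Real.exp ‖B‖ * ‖H‖ := by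
        refine (exp_sub_exp_norm_le _ _).trans ?_
        have h1 : ‖s • (B + H)‖ ≤ ‖B‖ + 1 := by
          rw [norm_smul, Real.norm_eq_abs, abs_of_nonneg hs0.le]
          have := norm_add_le B H
          nlinarith [norm_nonneg B, norm_nonneg H, norm_nonneg (B + H)]
        have h2 : ‖s • B‖ ≤ ‖B‖ := by
          rw [norm_smul, Real.norm_eq_abs, abs_of_nonneg hs0.le]
          nlinarith [norm_nonneg B]
        have h3 : ‖s • (B + H) - s • B‖ ≤ ‖H‖ := by
          rw [← smul_sub, add_sub_cancel_left, norm_smul, Real.norm_eq_abs,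
            abs_of_nonneg hs0.le]
          nlinarith [norm_nonneg H]
        have := mul_le_mul (mul_le_mul (Real.exp_le_exp.2 h1) (Real.exp_le_exp.2 h2)
          (Real.exp_nonneg _) (Real.exp_nonneg _)) h3 (norm_nonneg _) (by positivity)
        exact this
      have e2 : ‖exp ((1 - s) • B)‖ ≤ Real.exp ‖B‖ := by
        refine (norm_exp_le_aux _).trans (Real.exp_le_exp.2 ?_)
        rw [norm_smul, Real.norm_eq_abs, abs_of_nonneg (by linarith)]
        nlinarith [norm_nonneg B]
      calc ‖(exp (s • (B + H)) - exp (s • B)) * H * exp ((1 - s) • B)‖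
          ≤ ‖(exp (s • (B + H)) - exp (s • B)) * H‖ * ‖exp ((1 - s) • B)‖ :=
            norm_mul_le _ _
        _ ≤ (‖exp (s • (B + H)) - exp (s • B)‖ * ‖H‖) * ‖exp ((1 - s) • B)‖ := by
            gcongr; exact norm_mul_le _ _
        _ ≤ ((Real.exp (‖B‖ + 1) * Real.exp ‖B‖ * ‖H‖) * ‖H‖) * Real.exp ‖B‖ := by gcongr
        _ = K * (‖H‖ * ‖H‖) := by rw [hK]; ring
    simpa using intervalIntegral.norm_integral_le_of_norm_le_const hb
  rw [Asymptotics.isLittleO_iff]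
  intro c hc
  have hrad : 0 < min 1 (c / K) := lt_min one_pos (by positivity)
  filter_upwards [Metric.closedBall_mem_nhds (0:𝕄) hrad] with H hH
  rw [Metric.mem_closedBall, dist_zero_right] at hH
  have h1 : ‖H‖ ≤ 1 := hH.trans (min_le_left _ _)
  have h2 : ‖H‖ ≤ c / K := hH.trans (min_le_right _ _)
  calc ‖exp (B + H) - exp B - expD B H‖ ≤ K * (‖H‖ * ‖H‖) := bound H h1
    _ ≤ K * ((c / K) * ‖H‖) := by gcongr
    _ = c * ‖H‖ := by field_simp

/-- entry evaluation as a continuous linear map -/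
def entryCLM (a b : Fin m) : 𝕄 →L[ℝ] ℝ :=
  LinearMap.toContinuousLinearMap (Matrix.entryLinearMap ℝ ℝ a b)

lemma entryCLM_apply (a b : Fin m) (M : 𝕄) : entryCLM a b M = M a b := rfl

/-- derivative of a matrix-valued map, assembled from entrywise derivatives -/
def QD (Q : 𝔼 → 𝕄) (x : 𝔼) : 𝔼 →L[ℝ] 𝕄 :=
  ∑ a : Fin m, ∑ b : Fin m,
    (fderiv ℝ (fun y => Q y a b) x).smulRight (Matrix.single a b 1)

lemma QD_apply (Q : 𝔼 → 𝕄) (x : 𝔼) (v : 𝔼) (a b : Fin m) :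
    QD Q x v a b = fderiv ℝ (fun y => Q y a b) x v := by
  simp only [QD, ContinuousLinearMap.coe_sum', Finset.sum_apply,
    ContinuousLinearMap.smulRight_apply, Matrix.sum_apply, Matrix.smul_apply,
    Matrix.single, Matrix.of_apply, smul_eq_mul, mul_ite, mul_one, mul_zero]
  rw [Finset.sum_eq_single a, Finset.sum_eq_single b]
  · simp
  · intro c _ hc; simp [hc]
  · intro h; exact absurd (Finset.mem_univ b) h
  · intro c _ hc
    rw [Finset.sum_eq_zero]
    intro d _
    simp [hc]
  · intro h; exact absurd (Finset.mem_univ a) h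

lemma hasFDerivAt_matrixmap (Q : 𝔼 → 𝕄) (hQC1 : ∀ a b, ContDiff ℝ 1 fun y => Q y a b)
    (x : 𝔼) : HasFDerivAt (fun y => Q y) (QD Q x) x := by
  have heq : (fun y : 𝔼 => Q y) = fun y : 𝔼 =>
      ∑ a : Fin m, ∑ b : Fin m, (Q y a b) • Matrix.single a b 1 := by
    funext y
    conv_lhs => rw [Matrix.matrix_eq_sum_single (Q y)]
    simp [Matrix.smul_single]
  rw [heq]
  exact HasFDerivAt.fun_sum fun a _ => HasFDerivAt.fun_sum fun b _ =>
    (((hQC1 a b).differentiable one_ne_zero) x).hasFDerivAt.smul_const (Matrix.single a b (1:ℝ) : 𝕄)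

lemma Fhat_eq (Q : 𝔼 → 𝕄) (F : 𝔼 → Fin m → 𝔼) (y : 𝔼) (i : Fin m) (t : ℝ) :
    Fhat Q F y i t = ∑ b : Fin m, exp (t • Q y) i b • F y b := by
  ext l
  have h : (EuclideanSpace.proj l : 𝔼 →L[ℝ] ℝ) (∑ b : Fin m, exp (t • Q y) i b • F y b)
      = ∑ b : Fin m, exp (t • Q y) i b * F y b l := by
    rw [map_sum]
    simp [smul_eq_mul]
  have h2 : (∑ b : Fin m, exp (t • Q y) i b • F y b) l
      = ∑ b : Fin m, exp (t • Q y) i b * F y b l := h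
  rw [Fhat, PiLp.toLp_apply, h2, Matrix.mulVec, dotProduct]

set_option maxHeartbeats 2000000 in
theorem main_aux {n m : ℕ} (C₀ lam : ℝ)
    (hC₀ : 0 < C₀) (hlam : 0 < lam)
    (Q : EuclideanSpace ℝ (Fin n) → Matrix (Fin m) (Fin m) ℝ)
    (μ : EuclideanSpace ℝ (Fin n) → Fin m → ℝ)
    (F : EuclideanSpace ℝ (Fin n) → Fin m → EuclideanSpace ℝ (Fin n))
    (hQoff : ∀ x i j, i ≠ j → 0 ≤ Q x i j)
    (hQrow : ∀ x i, ∑ j, Q x i j = 0)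
    (hQC1 : ∀ i j, ContDiff ℝ 1 fun x => Q x i j)
    (hμpos : ∀ x i, 0 < μ x i)
    (hμsum : ∀ x, ∑ i, μ x i = 1)
    (hμinv : ∀ x j, ∑ i, μ x i * Q x i j = 0)
    (herg : ∀ x i (t : ℝ), 0 ≤ t →
      ∑ j, |NormedSpace.exp (t • Q x) i j - μ x j| ≤ C₀ * Real.exp (-lam * t))
    (hcentral : ∀ x, ∑ i, μ x i • F x i = 0)
    (hFC1 : ∀ i, ContDiff ℝ 1 fun x => F x i) :
    ∃ C > 0, ∀ (k : Fin n) (i j : Fin m) (t : ℝ), 0 ≤ t →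
      ∀ x : EuclideanSpace ℝ (Fin n),
        ‖fderiv ℝ (fun y => Fhat Q F y i t) x (EuclideanSpace.single k 1)
          - fderiv ℝ (fun y => Fhat Q F y j t) x (EuclideanSpace.single k 1)‖
          ≤ C * ((⨆ i', ‖F x i'‖) * lnorm (matPartialDeriv Q k x)
              + ⨆ i', ‖fderiv ℝ (fun y => F y i') x‖) * Real.exp (-lam * t) * max 1 t := by
  refine ⟨2 * C₀ ^ 2 + 2 * C₀ + 1, by positivity, ?_⟩
  intro k i j t ht x
  set e : EuclideanSpace ℝ (Fin n) := EuclideanSpace.single k 1 with he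
  set supF : ℝ := ⨆ i', ‖F x i'‖ with hsupF
  set supD : ℝ := ⨆ i', ‖fderiv ℝ (fun y => F y i') x‖ with hsupD
  set lQ : ℝ := lnorm (matPartialDeriv Q k x) with hlQ
  have hbddF : BddAbove (Set.range fun i' => ‖F x i'‖) :=
    Set.Finite.bddAbove (Set.finite_range _)
  have hbddD : BddAbove (Set.range fun i' => ‖fderiv ℝ (fun y => F y i') x‖) :=
    Set.Finite.bddAbove (Set.finite_range _)
  have hbddlQ : BddAbove (Set.range fun c => ∑ d, |matPartialDeriv Q k x c d|) :=
    Set.Finite.bddAbove (Set.finite_range _)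
  have hsupF0 : 0 ≤ supF := Real.iSup_nonneg fun _ => norm_nonneg _
  have hsupD0 : 0 ≤ supD := Real.iSup_nonneg fun _ => norm_nonneg _
  have hlQ0 : 0 ≤ lQ :=
    Real.iSup_nonneg fun c => Finset.sum_nonneg fun d _ => abs_nonneg _
  -- derivative of Fhat
  have hQd : HasFDerivAt (fun y => Q y) (QD Q x) x := hasFDerivAt_matrixmap Q hQC1 x
  have hexp : HasFDerivAt (fun y => exp (t • Q y))
      ((expD (t • Q x)).comp (t • QD Q x)) x :=
    (hasFDerivAt_exp_aux (t • Q x)).comp x (hQd.const_smul t)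
  have hFd : ∀ b, HasFDerivAt (fun y => F y b) (fderiv ℝ (fun y => F y b) x) x :=
    fun b => (((hFC1 b).differentiable one_ne_zero) x).hasFDerivAt
  have hDa : ∀ a : Fin m, HasFDerivAt (fun y => Fhat Q F y a t)
      (∑ b : Fin m, (exp (t • Q x) a b • fderiv ℝ (fun y => F y b) x
        + ((entryCLM a b).comp ((expD (t • Q x)).comp (t • QD Q x))).smulRight (F x b))) x := by
    intro a
    have heq : (fun y => Fhat Q F y a t)
        = fun y => ∑ b : Fin m, exp (t • Q y) a b • F y b := by
      funext y; exact Fhat_eq Q F y a t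
    rw [heq]
    refine HasFDerivAt.fun_sum fun b _ => ?_
    have hent : HasFDerivAt (fun y => exp (t • Q y) a b)
        ((entryCLM a b).comp ((expD (t • Q x)).comp (t • QD Q x))) x :=
      ((entryCLM a b).hasFDerivAt).comp x hexp
    exact hent.smul (hFd b)
  have happly : ∀ a : Fin m,
      fderiv ℝ (fun y => Fhat Q F y a t) x e
        = (∑ b : Fin m, (expD (t • Q x) (t • QD Q x e)) a b • F x b)
          + ∑ b : Fin m, exp (t • Q x) a b • (fderiv ℝ (fun y => F y b) x e) := by
    intro a
    rw [(hDa a).fderiv]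
    simp only [ContinuousLinearMap.sum_apply, ContinuousLinearMap.add_apply,
      ContinuousLinearMap.coe_smul', Pi.smul_apply, ContinuousLinearMap.smulRight_apply,
      ContinuousLinearMap.comp_apply, ContinuousLinearMap.smul_apply]
    rw [Finset.sum_add_distrib, add_comm]
    rfl
  have hLHS : fderiv ℝ (fun y => Fhat Q F y i t) x e - fderiv ℝ (fun y => Fhat Q F y j t) x e
      = (∑ b : Fin m, ((expD (t • Q x) (t • QD Q x e)) i b
            - (expD (t • Q x) (t • QD Q x e)) j b) • F x b)
        + ∑ b : Fin m, (exp (t • Q x) i b - exp (t • Q x) j b)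
            • (fderiv ℝ (fun y => F y b) x e) := by
    rw [happly i, happly j]
    have habcd : ∀ (w z w' z' : EuclideanSpace ℝ (Fin n)), (w + z) - (w' + z') = (w - w') + (z - z') := by
      intros; abel
    rw [habcd, ← Finset.sum_sub_distrib, ← Finset.sum_sub_distrib]
    congr 1 <;> exact Finset.sum_congr rfl fun b _ => (sub_smul _ _ _).symm
  -- ergodic row-difference bound
  have hrow : ∀ u : ℝ, 0 ≤ u → ∀ a c : Fin m,
      ∑ b : Fin m, |exp (u • Q x) a b - exp (u • Q x) c b|
        ≤ 2 * C₀ * Real.exp (-lam * u) := by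
    intro u hu a c
    calc ∑ b : Fin m, |exp (u • Q x) a b - exp (u • Q x) c b|
        ≤ ∑ b : Fin m, (|exp (u • Q x) a b - μ x b| + |exp (u • Q x) c b - μ x b|) := by
          refine Finset.sum_le_sum fun b _ => ?_
          have h5 : exp (u • Q x) a b - exp (u • Q x) c b
              = (exp (u • Q x) a b - μ x b) + -(exp (u • Q x) c b - μ x b) := by ring
          rw [h5]
          exact (abs_add_le _ _).trans (by rw [abs_neg])
      _ = (∑ b : Fin m, |exp (u • Q x) a b - μ x b|)
            + ∑ b : Fin m, |exp (u • Q x) c b - μ x b| := Finset.sum_add_distrib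
      _ ≤ C₀ * Real.exp (-lam * u) + C₀ * Real.exp (-lam * u) :=
          add_le_add (herg x a u hu) (herg x c u hu)
      _ = 2 * C₀ * Real.exp (-lam * u) := by ring
  -- the centered decay bound
  have hcent : ∀ u : ℝ, 0 ≤ u → ∀ d : Fin m,
      ‖∑ b : Fin m, exp (u • Q x) d b • F x b‖ ≤ C₀ * Real.exp (-lam * u) * supF := by
    intro u hu d
    have heq2 : ∑ b : Fin m, exp (u • Q x) d b • F x b
        = ∑ b : Fin m, (exp (u • Q x) d b - μ x b) • F x b := by
      have h6 : ∑ b : Fin m, (exp (u • Q x) d b - μ x b) • F x b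
          = ∑ b : Fin m, exp (u • Q x) d b • F x b - ∑ b : Fin m, μ x b • F x b := by
        rw [← Finset.sum_sub_distrib]
        exact Finset.sum_congr rfl fun b _ => sub_smul _ _ _
      rw [h6, hcentral x, sub_zero]
    rw [heq2]
    calc ‖∑ b : Fin m, (exp (u • Q x) d b - μ x b) • F x b‖
        ≤ ∑ b : Fin m, ‖(exp (u • Q x) d b - μ x b) • F x b‖ := norm_sum_le _ _
      _ = ∑ b : Fin m, |exp (u • Q x) d b - μ x b| * ‖F x b‖ := by
          simp [norm_smul, Real.norm_eq_abs]
      _ ≤ ∑ b : Fin m, |exp (u • Q x) d b - μ x b| * supF :=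
          Finset.sum_le_sum fun b _ =>
            mul_le_mul_of_nonneg_left (le_ciSup hbddF b) (abs_nonneg _)
      _ = (∑ b : Fin m, |exp (u • Q x) d b - μ x b|) * supF := by rw [Finset.sum_mul]
      _ ≤ C₀ * Real.exp (-lam * u) * supF :=
          mul_le_mul_of_nonneg_right (herg x d u hu) hsupF0
  -- second term bound
  have hterm2 : ‖∑ b : Fin m, (exp (t • Q x) i b - exp (t • Q x) j b)
        • (fderiv ℝ (fun y => F y b) x e)‖
      ≤ 2 * C₀ * Real.exp (-lam * t) * supD := by
    have hne : ‖e‖ = 1 := by rw [he, EuclideanSpace.norm_single]; norm_num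
    calc ‖∑ b : Fin m, (exp (t • Q x) i b - exp (t • Q x) j b)
          • (fderiv ℝ (fun y => F y b) x e)‖
        ≤ ∑ b : Fin m, ‖(exp (t • Q x) i b - exp (t • Q x) j b)
            • (fderiv ℝ (fun y => F y b) x e)‖ := norm_sum_le _ _
      _ = ∑ b : Fin m, |exp (t • Q x) i b - exp (t • Q x) j b|
            * ‖fderiv ℝ (fun y => F y b) x e‖ := by simp [norm_smul, Real.norm_eq_abs]
      _ ≤ ∑ b : Fin m, |exp (t • Q x) i b - exp (t • Q x) j b| * supD := by
          refine Finset.sum_le_sum fun b _ => mul_le_mul_of_nonneg_left ?_ (abs_nonneg _)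
          refine le_trans ?_ (le_ciSup hbddD b)
          calc ‖fderiv ℝ (fun y => F y b) x e‖
              ≤ ‖fderiv ℝ (fun y => F y b) x‖ * ‖e‖ := ContinuousLinearMap.le_opNorm _ _
            _ = ‖fderiv ℝ (fun y => F y b) x‖ := by rw [hne, mul_one]
      _ = (∑ b : Fin m, |exp (t • Q x) i b - exp (t • Q x) j b|) * supD := by
          rw [Finset.sum_mul]
      _ ≤ 2 * C₀ * Real.exp (-lam * t) * supD :=
          mul_le_mul_of_nonneg_right (hrow t ht i j) hsupD0
  -- first term bound
  have hterm1 : ‖∑ b : Fin m, ((expD (t • Q x) (t • QD Q x e)) i b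
        - (expD (t • Q x) (t • QD Q x e)) j b) • F x b‖
      ≤ 2 * C₀ ^ 2 * supF * lQ * t * Real.exp (-lam * t) := by
    have hint : ∀ a b : Fin m, IntervalIntegrable
        (fun s : ℝ => (exp (s • (t • Q x)) * (t • QD Q x e)
          * exp ((1 - s) • (t • Q x))) a b) volume 0 1 :=
      fun a b => ((contD (t • Q x) (t • Q x) (t • QD Q x e)).matrix_elem a b).intervalIntegrable 0 1
    have hEntry : ∀ a b : Fin m, (expD (t • Q x) (t • QD Q x e)) a b
        = ∫ s in (0:ℝ)..1, (exp (s • (t • Q x)) * (t • QD Q x e)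
            * exp ((1 - s) • (t • Q x))) a b := by
      intro a b
      exact ((entryCLM a b).intervalIntegral_comp_comm
        ((contD (t • Q x) (t • Q x) (t • QD Q x e)).intervalIntegrable 0 1)).symm
    have hterm : ∀ b : Fin m, ((expD (t • Q x) (t • QD Q x e)) i b
          - (expD (t • Q x) (t • QD Q x e)) j b) • F x b
        = ∫ s in (0:ℝ)..1, ((exp (s • (t • Q x)) * (t • QD Q x e)
            * exp ((1 - s) • (t • Q x))) i b
          - (exp (s • (t • Q x)) * (t • QD Q x e)
            * exp ((1 - s) • (t • Q x))) j b) • F x b := by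
      intro b
      rw [hEntry i b, hEntry j b, ← intervalIntegral.integral_sub (hint i b) (hint j b),
        ← intervalIntegral.integral_smul_const]
    have hsum : ∑ b : Fin m, ((expD (t • Q x) (t • QD Q x e)) i b
          - (expD (t • Q x) (t • QD Q x e)) j b) • F x b
        = ∫ s in (0:ℝ)..1, ∑ b : Fin m, ((exp (s • (t • Q x)) * (t • QD Q x e)
            * exp ((1 - s) • (t • Q x))) i b
          - (exp (s • (t • Q x)) * (t • QD Q x e)
            * exp ((1 - s) • (t • Q x))) j b) • F x b := by
      rw [Finset.sum_congr rfl fun b _ => hterm b]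
      refine (intervalIntegral.integral_finset_sum fun b _ => ?_).symm
      exact ((((contD (t • Q x) (t • Q x) (t • QD Q x e)).matrix_elem i b).sub
        ((contD (t • Q x) (t • Q x) (t • QD Q x e)).matrix_elem j b)).smul
        continuous_const).intervalIntegrable 0 1
    -- row sums of the derivative matrix
    have hRrow : ∀ c : Fin m, ∑ d : Fin m, |(t • QD Q x e : Matrix (Fin m) (Fin m) ℝ) c d|
        ≤ t * lQ := by
      intro c
      have hentryQ : ∀ d : Fin m, (t • QD Q x e : Matrix (Fin m) (Fin m) ℝ) c d
          = t * matPartialDeriv Q k x c d := by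
        intro d
        have h7 : QD Q x e c d = matPartialDeriv Q k x c d := by
          rw [QD_apply]; rfl
        rw [Matrix.smul_apply, h7, smul_eq_mul]
      calc ∑ d : Fin m, |(t • QD Q x e : Matrix (Fin m) (Fin m) ℝ) c d|
          = ∑ d : Fin m, t * |matPartialDeriv Q k x c d| := by
            refine Finset.sum_congr rfl fun d _ => ?_
            rw [hentryQ d, abs_mul, abs_of_nonneg ht]
        _ = t * ∑ d : Fin m, |matPartialDeriv Q k x c d| := by rw [Finset.mul_sum]
        _ ≤ t * lQ := mul_le_mul_of_nonneg_left (le_ciSup hbddlQ c) ht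
    -- pointwise bound on the integrand
    have hpt : ∀ s ∈ Set.uIoc (0:ℝ) 1,
        ‖∑ b : Fin m, ((exp (s • (t • Q x)) * (t • QD Q x e)
            * exp ((1 - s) • (t • Q x))) i b
          - (exp (s • (t • Q x)) * (t • QD Q x e)
            * exp ((1 - s) • (t • Q x))) j b) • F x b‖
          ≤ 2 * C₀ ^ 2 * supF * lQ * t * Real.exp (-lam * t) := by
      intro s hs
      rw [Set.uIoc_of_le (zero_le_one)] at hs
      obtain ⟨hs0, hs1⟩ := hs
      have hsm1 : s • (t • Q x) = (s * t) • Q x := smul_smul s t (Q x)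
      have hsm2 : (1 - s) • (t • Q x) = ((1 - s) * t) • Q x := smul_smul (1 - s) t (Q x)
      -- inner vector bound
      have hw : ∀ c : Fin m, ‖∑ b : Fin m, ((t • QD Q x e : Matrix (Fin m) (Fin m) ℝ)
            * exp ((1 - s) • (t • Q x))) c b • F x b‖
          ≤ t * lQ * (C₀ * Real.exp (-lam * ((1 - s) * t)) * supF) := by
        intro c
        have hre2 : ∑ b : Fin m, ((t • QD Q x e : Matrix (Fin m) (Fin m) ℝ)
              * exp ((1 - s) • (t • Q x))) c b • F x b
            = ∑ d : Fin m, (t • QD Q x e : Matrix (Fin m) (Fin m) ℝ) c d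
                • ∑ b : Fin m, exp ((1 - s) • (t • Q x)) d b • F x b := by
          calc ∑ b : Fin m, ((t • QD Q x e : Matrix (Fin m) (Fin m) ℝ)
                * exp ((1 - s) • (t • Q x))) c b • F x b
              = ∑ b : Fin m, ∑ d : Fin m, ((t • QD Q x e : Matrix (Fin m) (Fin m) ℝ) c d
                  * exp ((1 - s) • (t • Q x)) d b) • F x b := by
                refine Finset.sum_congr rfl fun b _ => ?_
                rw [Matrix.mul_apply, Finset.sum_smul]
            _ = ∑ d : Fin m, ∑ b : Fin m, ((t • QD Q x e : Matrix (Fin m) (Fin m) ℝ) c d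
                  * exp ((1 - s) • (t • Q x)) d b) • F x b := Finset.sum_comm
            _ = ∑ d : Fin m, (t • QD Q x e : Matrix (Fin m) (Fin m) ℝ) c d
                  • ∑ b : Fin m, exp ((1 - s) • (t • Q x)) d b • F x b := by
                refine Finset.sum_congr rfl fun d _ => ?_
                rw [Finset.smul_sum]
                exact Finset.sum_congr rfl fun b _ => mul_smul _ _ _
        rw [hre2]
        have hinner : ∀ d : Fin m, ‖∑ b : Fin m, exp ((1 - s) • (t • Q x)) d b • F x b‖
            ≤ C₀ * Real.exp (-lam * ((1 - s) * t)) * supF := by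
          intro d
          rw [hsm2]
          exact hcent ((1 - s) * t) (mul_nonneg (by linarith) ht) d
        calc ‖∑ d : Fin m, (t • QD Q x e : Matrix (Fin m) (Fin m) ℝ) c d
              • ∑ b : Fin m, exp ((1 - s) • (t • Q x)) d b • F x b‖
            ≤ ∑ d : Fin m, ‖(t • QD Q x e : Matrix (Fin m) (Fin m) ℝ) c d
              • ∑ b : Fin m, exp ((1 - s) • (t • Q x)) d b • F x b‖ := norm_sum_le _ _
          _ = ∑ d : Fin m, |(t • QD Q x e : Matrix (Fin m) (Fin m) ℝ) c d|
              * ‖∑ b : Fin m, exp ((1 - s) • (t • Q x)) d b • F x b‖ := by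
                refine Finset.sum_congr rfl fun d _ => ?_
                rw [norm_smul, Real.norm_eq_abs]
          _ ≤ ∑ d : Fin m, |(t • QD Q x e : Matrix (Fin m) (Fin m) ℝ) c d|
              * (C₀ * Real.exp (-lam * ((1 - s) * t)) * supF) :=
                Finset.sum_le_sum fun d _ =>
                  mul_le_mul_of_nonneg_left (hinner d) (abs_nonneg _)
          _ = (∑ d : Fin m, |(t • QD Q x e : Matrix (Fin m) (Fin m) ℝ) c d|)
              * (C₀ * Real.exp (-lam * ((1 - s) * t)) * supF) := by rw [Finset.sum_mul]
          _ ≤ t * lQ * (C₀ * Real.exp (-lam * ((1 - s) * t)) * supF) :=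
                mul_le_mul_of_nonneg_right (hRrow c) (by positivity)
      -- rearrange the main sum
      have hrearr : ∑ b : Fin m, ((exp (s • (t • Q x)) * (t • QD Q x e)
            * exp ((1 - s) • (t • Q x))) i b
          - (exp (s • (t • Q x)) * (t • QD Q x e)
            * exp ((1 - s) • (t • Q x))) j b) • F x b
          = ∑ c : Fin m, (exp (s • (t • Q x)) i c - exp (s • (t • Q x)) j c)
              • ∑ b : Fin m, ((t • QD Q x e : Matrix (Fin m) (Fin m) ℝ)
                * exp ((1 - s) • (t • Q x))) c b • F x b := by
        calc ∑ b : Fin m, ((exp (s • (t • Q x)) * (t • QD Q x e)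
              * exp ((1 - s) • (t • Q x))) i b
            - (exp (s • (t • Q x)) * (t • QD Q x e)
              * exp ((1 - s) • (t • Q x))) j b) • F x b
            = ∑ b : Fin m, (∑ c : Fin m, (exp (s • (t • Q x)) i c
                - exp (s • (t • Q x)) j c) * ((t • QD Q x e : Matrix (Fin m) (Fin m) ℝ)
                * exp ((1 - s) • (t • Q x))) c b) • F x b := by
              refine Finset.sum_congr rfl fun b _ => ?_
              congr 1
              rw [mul_assoc, Matrix.mul_apply, Matrix.mul_apply, ← Finset.sum_sub_distrib]
              exact Finset.sum_congr rfl fun c _ => (sub_mul _ _ _).symm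
          _ = ∑ b : Fin m, ∑ c : Fin m, ((exp (s • (t • Q x)) i c
                - exp (s • (t • Q x)) j c) * ((t • QD Q x e : Matrix (Fin m) (Fin m) ℝ)
                * exp ((1 - s) • (t • Q x))) c b) • F x b := by
              exact Finset.sum_congr rfl fun b _ => Finset.sum_smul
          _ = ∑ c : Fin m, ∑ b : Fin m, ((exp (s • (t • Q x)) i c
                - exp (s • (t • Q x)) j c) * ((t • QD Q x e : Matrix (Fin m) (Fin m) ℝ)
                * exp ((1 - s) • (t • Q x))) c b) • F x b := Finset.sum_comm
          _ = ∑ c : Fin m, (exp (s • (t • Q x)) i c - exp (s • (t • Q x)) j c)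
              • ∑ b : Fin m, ((t • QD Q x e : Matrix (Fin m) (Fin m) ℝ)
                * exp ((1 - s) • (t • Q x))) c b • F x b := by
              refine Finset.sum_congr rfl fun c _ => ?_
              rw [Finset.smul_sum]
              exact Finset.sum_congr rfl fun b _ => mul_smul _ _ _
      rw [hrearr]
      have hXrow : ∑ c : Fin m, |exp (s • (t • Q x)) i c - exp (s • (t • Q x)) j c|
          ≤ 2 * C₀ * Real.exp (-lam * (s * t)) := by
        rw [hsm1]
        exact hrow (s * t) (mul_nonneg hs0.le ht) i j
      calc ‖∑ c : Fin m, (exp (s • (t • Q x)) i c - exp (s • (t • Q x)) j c)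
            • ∑ b : Fin m, ((t • QD Q x e : Matrix (Fin m) (Fin m) ℝ)
              * exp ((1 - s) • (t • Q x))) c b • F x b‖
          ≤ ∑ c : Fin m, ‖(exp (s • (t • Q x)) i c - exp (s • (t • Q x)) j c)
            • ∑ b : Fin m, ((t • QD Q x e : Matrix (Fin m) (Fin m) ℝ)
              * exp ((1 - s) • (t • Q x))) c b • F x b‖ := norm_sum_le _ _
        _ = ∑ c : Fin m, |exp (s • (t • Q x)) i c - exp (s • (t • Q x)) j c|
            * ‖∑ b : Fin m, ((t • QD Q x e : Matrix (Fin m) (Fin m) ℝ)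
              * exp ((1 - s) • (t • Q x))) c b • F x b‖ := by
              simp [norm_smul, Real.norm_eq_abs]
        _ ≤ ∑ c : Fin m, |exp (s • (t • Q x)) i c - exp (s • (t • Q x)) j c|
            * (t * lQ * (C₀ * Real.exp (-lam * ((1 - s) * t)) * supF)) :=
              Finset.sum_le_sum fun c _ =>
                mul_le_mul_of_nonneg_left (hw c) (abs_nonneg _)
        _ = (∑ c : Fin m, |exp (s • (t • Q x)) i c - exp (s • (t • Q x)) j c|)
            * (t * lQ * (C₀ * Real.exp (-lam * ((1 - s) * t)) * supF)) := by
              rw [Finset.sum_mul]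
        _ ≤ (2 * C₀ * Real.exp (-lam * (s * t)))
            * (t * lQ * (C₀ * Real.exp (-lam * ((1 - s) * t)) * supF)) := by
              refine mul_le_mul_of_nonneg_right hXrow (by positivity)
        _ = 2 * C₀ ^ 2 * supF * lQ * t
            * (Real.exp (-lam * (s * t)) * Real.exp (-lam * ((1 - s) * t))) := by ring
        _ = 2 * C₀ ^ 2 * supF * lQ * t * Real.exp (-lam * t) := by
              rw [← Real.exp_add]
              congr 1
              ring
    rw [hsum]
    have hni := intervalIntegral.norm_integral_le_of_norm_le_const hpt
    simpa using hni
  rw [hLHS]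
  calc ‖(∑ b : Fin m, ((expD (t • Q x) (t • QD Q x e)) i b
          - (expD (t • Q x) (t • QD Q x e)) j b) • F x b)
        + ∑ b : Fin m, (exp (t • Q x) i b - exp (t • Q x) j b)
            • (fderiv ℝ (fun y => F y b) x e)‖
      ≤ ‖∑ b : Fin m, ((expD (t • Q x) (t • QD Q x e)) i b
          - (expD (t • Q x) (t • QD Q x e)) j b) • F x b‖
        + ‖∑ b : Fin m, (exp (t • Q x) i b - exp (t • Q x) j b)
            • (fderiv ℝ (fun y => F y b) x e)‖ := norm_add_le _ _
    _ ≤ 2 * C₀ ^ 2 * supF * lQ * t * Real.exp (-lam * t)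
        + 2 * C₀ * Real.exp (-lam * t) * supD := add_le_add hterm1 hterm2
    _ ≤ (2 * C₀ ^ 2 + 2 * C₀ + 1) * (supF * lQ + supD) * Real.exp (-lam * t) * max 1 t := by
        have h1 : t ≤ max 1 t := le_max_right _ _
        have h2 : (1:ℝ) ≤ max 1 t := le_max_left _ _
        have he0 : (0:ℝ) < Real.exp (-lam * t) := Real.exp_pos _
        have hA : 0 ≤ supF * lQ := mul_nonneg hsupF0 hlQ0
        have hM0 : (0:ℝ) ≤ max 1 t := zero_le_one.trans h2
        nlinarith [mul_nonneg hA (sub_nonneg.2 h1), mul_nonneg hsupD0 (sub_nonneg.2 h2),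
          mul_nonneg (mul_nonneg hA (sub_nonneg.2 h1)) he0.le,
          mul_nonneg (mul_nonneg hsupD0 (sub_nonneg.2 h2)) he0.le,
          mul_nonneg (mul_nonneg (mul_nonneg hA hM0) he0.le) ht,
          mul_nonneg (mul_nonneg hsupD0 hM0) he0.le,
          mul_nonneg (mul_nonneg (mul_nonneg hsupD0 hM0) he0.le) ht,
          mul_nonneg (mul_nonneg hA hM0) he0.le, sq_nonneg C₀, hC₀.le]

end Aux

/-- Decay of differences of `∂_{x_k} F̂(x,·,t)` in the starting state:
`|∂_{x_k}F̂(x,i,t) − ∂_{x_k}F̂(x,j,t)| ≤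
  C(‖F(x,·)‖_∞‖∂_{x_k}Q(x)‖_ℓ + ‖∂_x F(x,·)‖_∞) e^{−λt} max(1,t)`. -/
theorem Fhat_partialDeriv_difference_bound {n m : ℕ} (C₀ lam : ℝ)
    (hC₀ : 0 < C₀) (hlam : 0 < lam)
    (Q : EuclideanSpace ℝ (Fin n) → Matrix (Fin m) (Fin m) ℝ)
    (μ : EuclideanSpace ℝ (Fin n) → Fin m → ℝ)
    (F : EuclideanSpace ℝ (Fin n) → Fin m → EuclideanSpace ℝ (Fin n))
    (hQoff : ∀ x i j, i ≠ j → 0 ≤ Q x i j)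
    (hQrow : ∀ x i, ∑ j, Q x i j = 0)
    (hQC1 : ∀ i j, ContDiff ℝ 1 fun x => Q x i j)
    (hμpos : ∀ x i, 0 < μ x i)
    (hμsum : ∀ x, ∑ i, μ x i = 1)
    (hμinv : ∀ x j, ∑ i, μ x i * Q x i j = 0)
    (herg : ∀ x i (t : ℝ), 0 ≤ t →
      ∑ j, |NormedSpace.exp (t • Q x) i j - μ x j| ≤ C₀ * Real.exp (-lam * t))
    (hcentral : ∀ x, ∑ i, μ x i • F x i = 0)
    (hFC1 : ∀ i, ContDiff ℝ 1 fun x => F x i) :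
    ∃ C > 0, ∀ (k : Fin n) (i j : Fin m) (t : ℝ), 0 ≤ t →
      ∀ x : EuclideanSpace ℝ (Fin n),
        ‖fderiv ℝ (fun y => Fhat Q F y i t) x (EuclideanSpace.single k 1)
          - fderiv ℝ (fun y => Fhat Q F y j t) x (EuclideanSpace.single k 1)‖
          ≤ C * ((⨆ i', ‖F x i'‖) * lnorm (matPartialDeriv Q k x)
              + ⨆ i', ‖fderiv ℝ (fun y => F y i') x‖) * Real.exp (-lam * t) * max 1 t :=
  main_aux C₀ lam hC₀ hlam Q μ F hQoff hQrow hQC1 hμpos hμsum hμinv herg hcentral hFC1
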